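/- arXiv:1208.4974 — 2 statements merged into one kernel-verified Lean document; each statement's English description precedes it below -/
import Mathlib

section
/- Let E be a countable set, let P and P̃ be irreducible stochastic matrices on E, and let π and ν be invariant probability vectors for P and P̃ respectively. Suppose for some integer m ≥ 1 the quantities δ_m(k) := inf_{i∈E} P^m(i,k) satisfy ∑_k δ_m(k) > 0. Then ‖ν − π‖ ≤ ‖P^m − P̃^m‖ / (∑_k δ_m(k)) ≤ (m / ∑_k δ_m(k)) · ‖P̃ − P‖. -/
open scoped Classical ENNReal NNReal
open Filter MeasureTheory

noncomputable section

variable {E : Type*}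

def matPow (P : E → E → ℝ) : ℕ → E → E → ℝ
  | 0 => fun i j => if i = j then (1 : ℝ) else 0
  | n + 1 => fun i j => ∑' k, matPow P n i k * P k j

def IsStochastic (P : E → E → ℝ) : Prop :=
  (∀ i j, 0 ≤ P i j) ∧ ∀ i, ∑' j, P i j = 1

def IsIrred (P : E → E → ℝ) : Prop :=
  ∀ i j, ∃ n, 1 ≤ n ∧ 0 < matPow P n i j

def IsProbVec (π : E → ℝ) : Prop :=
  (∀ i, 0 ≤ π i) ∧ ∑' i, π i = 1

def InvariantFor (π : E → ℝ) (P : E → E → ℝ) : Prop :=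
  ∀ j, HasSum (fun i => π i * P i j) (π j)

def vecNorm (μ : E → ℝ) : ℝ := ∑' i, |μ i|

def rowSumNorm (L : E → E → ℝ) : ℝ := ⨆ i, ∑' j, |L i j|

def ergCoeff (B : E → E → ℝ) : ℝ :=
  (1 / 2) * ⨆ p : E × E, ∑' k, |B p.1 k - B p.2 k|

def IsIntensity (Q : E → E → ℝ) : Prop :=
  (∀ i j, i ≠ j → 0 ≤ Q i j) ∧ ∀ i, HasSum (Q i) 0

def UnifBdd (Q : E → E → ℝ) : Prop := ∃ M : ℝ, ∀ i, -Q i i ≤ M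

def QIrred (Q : E → E → ℝ) : Prop :=
  ∀ i j, i ≠ j → ∃ (r : ℕ) (k : ℕ → E), 1 ≤ r ∧ k 0 = i ∧ k r = j ∧
    ∀ s < r, 0 < Q (k s) (k (s + 1))

def QInvariant (π : E → ℝ) (Q : E → E → ℝ) : Prop :=
  ∀ j, HasSum (fun i => π i * Q i j) 0

def transP (Q : E → E → ℝ) (t : ℝ) : E → E → ℝ :=
  fun i j => ∑' n : ℕ, t ^ n / (Nat.factorial n : ℝ) * matPow Q n i j

def qErgCoeff (Q : E → E → ℝ) : ℝ :=
  (1 / 2) * ⨅ p : {p : E × E // p.1 ≠ p.2},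
    (|Q p.val.1 p.val.1 - Q p.val.2 p.val.1| + |Q p.val.1 p.val.2 - Q p.val.2 p.val.2|
      - ∑' s : E, if s ≠ p.val.1 ∧ s ≠ p.val.2 then |Q p.val.1 s - Q p.val.2 s| else 0)

def vVecNorm (V : E → ℝ) (μ : E → ℝ) : ℝ≥0∞ := ∑' i, ENNReal.ofReal (|μ i| * V i)

def vMatNorm (V : E → ℝ) (L : E → E → ℝ) : ℝ≥0∞ :=
  ⨆ i, (∑' j, ENNReal.ofReal (|L i j| * V j)) / ENNReal.ofReal (V i)

def vOneNorm (V : E → ℝ) : ℝ≥0∞ := ⨆ i, 1 / ENNReal.ofReal (V i)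

lemma probvec_summable {π : E → ℝ} (h : IsProbVec π) : Summable π := by
  by_contra hs
  have := h.2
  rw [tsum_eq_zero_of_not_summable hs] at this
  norm_num at this

lemma stoch_summable {P : E → E → ℝ} (h : IsStochastic P) (i : E) : Summable (P i) := by
  by_contra hs
  have := h.2 i
  rw [tsum_eq_zero_of_not_summable hs] at this
  norm_num at this

lemma stoch_le_one {P : E → E → ℝ} (h : IsStochastic P) (i j : E) : P i j ≤ 1 := by
  have := Summable.le_tsum (stoch_summable h i) j (fun k _ => h.1 i k)
  rwa [h.2 i] at this

lemma summable_uncurry_of {f : E → E → ℝ} (h0 : ∀ i j, 0 ≤ f i j)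
    (h1 : ∀ i, Summable (f i)) (h2 : Summable fun i => ∑' j, f i j) :
    Summable (Function.uncurry f) :=
  (summable_prod_of_nonneg (fun p => h0 p.1 p.2)).2 ⟨h1, h2⟩

lemma matPow_stoch {P : E → E → ℝ} (h : IsStochastic P) : ∀ n, IsStochastic (matPow P n) := by
  intro n
  induction n with
  | zero =>
    constructor
    · intro i j; dsimp [matPow]; split <;> norm_num
    · intro i; dsimp [matPow]
      rw [tsum_eq_single i (fun j hj => if_neg (fun hc => hj hc.symm))]
      simp
  | succ n IH =>
    have hA := IH
    constructor
    · intro i j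
      exact tsum_nonneg fun k => mul_nonneg (hA.1 i k) (h.1 k j)
    · intro i
      have hu : Summable (Function.uncurry (fun k j => matPow P n i k * P k j)) := by
        apply summable_uncurry_of
        · intro k j; exact mul_nonneg (hA.1 i k) (h.1 k j)
        · intro k; exact (stoch_summable h k).mul_left _
        · simpa [tsum_mul_left, h.2] using stoch_summable hA i
      show ∑' j, ∑' k, matPow P n i k * P k j = 1
      rw [Summable.tsum_comm hu]
      simp only [tsum_mul_left, h.2, mul_one]
      exact hA.2 i


lemma invariant_matPow {π : E → ℝ} {P : E → E → ℝ} (hπ : IsProbVec π) (hP : IsStochastic P)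
    (hinv : InvariantFor π P) : ∀ n, InvariantFor π (matPow P n) := by
  intro n
  induction n with
  | zero =>
    intro j
    have : (fun i => π i * matPow P 0 i j) = fun i => if i = j then π j else 0 := by
      funext i
      dsimp [matPow]
      split
      · next h => subst h; simp
      · simp
    rw [this]
    exact hasSum_ite_eq j (π j)
  | succ n IH =>
    intro j
    set A := matPow P n with hAdef
    have hA := matPow_stoch hP n
    have hAn1 := matPow_stoch hP (n + 1)
    have hsum : Summable fun i => π i * matPow P (n+1) i j := by
      apply Summable.of_nonneg_of_le
        (fun i => mul_nonneg (hπ.1 i) (hAn1.1 i j))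
        (fun i => by
          have := stoch_le_one hAn1 i j
          nlinarith [hπ.1 i])
        (probvec_summable hπ)
    rw [(hsum.hasSum_iff)]
    -- ∑' i, π i * ∑' k, A i k * P k j
    have step1 : ∀ i, π i * matPow P (n+1) i j = ∑' k, π i * (A i k * P k j) := by
      intro i
      show π i * ∑' k, A i k * P k j = _
      rw [tsum_mul_left]
    have hrowk : ∀ i, Summable (fun k => A i k * P k j) := by
      intro i
      apply Summable.of_nonneg_of_le (fun k => mul_nonneg (hA.1 i k) (hP.1 k j))
        (fun k => by nlinarith [stoch_le_one hP k j, hA.1 i k]) (stoch_summable hA i)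
    have hu : Summable (Function.uncurry (fun i k => π i * (A i k * P k j))) := by
      apply summable_uncurry_of
      · intro i k; exact mul_nonneg (hπ.1 i) (mul_nonneg (hA.1 i k) (hP.1 k j))
      · intro i; exact (hrowk i).mul_left _
      · apply Summable.of_nonneg_of_le
          (fun i => tsum_nonneg fun k => mul_nonneg (hπ.1 i) (mul_nonneg (hA.1 i k) (hP.1 k j)))
          (fun i => ?_) (probvec_summable hπ)
        rw [tsum_mul_left]
        have h1 : ∑' k, A i k * P k j ≤ 1 := by
          calc ∑' k, A i k * P k j ≤ ∑' k, A i k :=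
                Summable.tsum_le_tsum (fun k => by nlinarith [stoch_le_one hP k j, hA.1 i k])
                  (hrowk i) (stoch_summable hA i)
            _ = 1 := hA.2 i
        have h2 : (0:ℝ) ≤ ∑' k, A i k * P k j :=
          tsum_nonneg fun k => mul_nonneg (hA.1 i k) (hP.1 k j)
        nlinarith [hπ.1 i]
    calc ∑' i, π i * matPow P (n+1) i j = ∑' i, ∑' k, π i * (A i k * P k j) := by
          exact tsum_congr step1
      _ = ∑' k, ∑' i, π i * (A i k * P k j) := (Summable.tsum_comm hu).symm
      _ = ∑' k, (∑' i, π i * A i k) * P k j := by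
          refine tsum_congr fun k => ?_
          rw [← tsum_mul_right]
          exact tsum_congr fun i => by ring
      _ = ∑' k, π k * P k j := by
          refine tsum_congr fun k => ?_
          rw [(IH k).tsum_eq]
      _ = π j := (hinv j).tsum_eq


lemma rowDiff_summable {P Pt : E → E → ℝ} (hP : IsStochastic P) (hPt : IsStochastic Pt) (i : E) :
    Summable fun j => |P i j - Pt i j| := by
  apply Summable.of_nonneg_of_le (fun j => abs_nonneg _)
    (fun j => (abs_sub (P i j) (Pt i j)).trans (by
      rw [abs_of_nonneg (hP.1 i j), abs_of_nonneg (hPt.1 i j)]))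
  exact (stoch_summable hP i).add (stoch_summable hPt i)

lemma pow_diff_row_le {P Pt : E → E → ℝ} (hP : IsStochastic P) (hPt : IsStochastic Pt)
    {C : ℝ} (hC0 : 0 ≤ C) (hC : ∀ k, ∑' j, |P k j - Pt k j| ≤ C) :
    ∀ n i, ∑' j, |matPow P n i j - matPow Pt n i j| ≤ n * C := by
  intro n
  induction n with
  | zero =>
    intro i
    have : ∀ j, |matPow P 0 i j - matPow Pt 0 i j| = 0 := by
      intro j; dsimp [matPow]; simp
    simp [this]
  | succ n IH =>
    intro i
    set An := matPow P n
    set Atn := matPow Pt n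
    have hAn := matPow_stoch hP n
    have hAtn := matPow_stoch hPt n
    have hAn1 := matPow_stoch hP (n + 1)
    have hAtn1 := matPow_stoch hPt (n + 1)
    have hdiff : Summable fun k => |An i k - Atn i k| := rowDiff_summable hAn hAtn i
    -- summabilities of products
    have sAnP : ∀ j, Summable fun k => An i k * P k j := fun j =>
      Summable.of_nonneg_of_le (fun k => mul_nonneg (hAn.1 i k) (hP.1 k j))
        (fun k => by nlinarith [stoch_le_one hP k j, hAn.1 i k]) (stoch_summable hAn i)
    have sAtnP : ∀ j, Summable fun k => Atn i k * P k j := fun j =>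
      Summable.of_nonneg_of_le (fun k => mul_nonneg (hAtn.1 i k) (hP.1 k j))
        (fun k => by nlinarith [stoch_le_one hP k j, hAtn.1 i k]) (stoch_summable hAtn i)
    have sAtnPt : ∀ j, Summable fun k => Atn i k * Pt k j := fun j =>
      Summable.of_nonneg_of_le (fun k => mul_nonneg (hAtn.1 i k) (hPt.1 k j))
        (fun k => by nlinarith [stoch_le_one hPt k j, hAtn.1 i k]) (stoch_summable hAtn i)
    -- pointwise decomposition
    have key : ∀ j, matPow P (n+1) i j - matPow Pt (n+1) i j =
        (∑' k, (An i k - Atn i k) * P k j) + ∑' k, Atn i k * (P k j - Pt k j) := by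
      intro j
      have e1 : (∑' k, (An i k - Atn i k) * P k j) =
          (∑' k, An i k * P k j) - ∑' k, Atn i k * P k j := by
        rw [← Summable.tsum_sub (sAnP j) (sAtnP j)]
        exact tsum_congr fun k => by ring
      have e2 : (∑' k, Atn i k * (P k j - Pt k j)) =
          (∑' k, Atn i k * P k j) - ∑' k, Atn i k * Pt k j := by
        rw [← Summable.tsum_sub (sAtnP j) (sAtnPt j)]
        exact tsum_congr fun k => by ring
      rw [e1, e2]
      show (∑' k, An i k * P k j) - (∑' k, Atn i k * Pt k j) = _
      ring
    -- pointwise abs bound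
    have sabs1 : ∀ j, Summable fun k => |An i k - Atn i k| * P k j := fun j =>
      Summable.of_nonneg_of_le (fun k => mul_nonneg (abs_nonneg _) (hP.1 k j))
        (fun k => by nlinarith [stoch_le_one hP k j, abs_nonneg (An i k - Atn i k)]) hdiff
    have habsPPt : ∀ k j, |P k j - Pt k j| ≤ 2 := by
      intro k j
      have := abs_sub (P k j) (Pt k j)
      have h1 := stoch_le_one hP k j
      have h2 := stoch_le_one hPt k j
      rw [abs_of_nonneg (hP.1 k j), abs_of_nonneg (hPt.1 k j)] at this
      linarith
    have sabs2 : ∀ j, Summable fun k => Atn i k * |P k j - Pt k j| := fun j =>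
      Summable.of_nonneg_of_le (fun k => mul_nonneg (hAtn.1 i k) (abs_nonneg _))
        (fun k => by nlinarith [habsPPt k j, hAtn.1 i k])
        ((stoch_summable hAtn i).mul_right 2)
    have ptwise : ∀ j, |matPow P (n+1) i j - matPow Pt (n+1) i j| ≤
        (∑' k, |An i k - Atn i k| * P k j) + ∑' k, Atn i k * |P k j - Pt k j| := by
      intro j
      rw [key j]
      refine (abs_add_le _ _).trans (add_le_add ?_ ?_)
      · have hn1 : Summable fun k => ‖(An i k - Atn i k) * P k j‖ :=
          (sabs1 j).congr (fun k => by
            rw [Real.norm_eq_abs, abs_mul, abs_of_nonneg (hP.1 k j)])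
        refine (norm_tsum_le_tsum_norm hn1).trans (le_of_eq (tsum_congr fun k => ?_))
        rw [Real.norm_eq_abs, abs_mul, abs_of_nonneg (hP.1 k j)]
      · have hn2 : Summable fun k => ‖Atn i k * (P k j - Pt k j)‖ :=
          (sabs2 j).congr (fun k => by
            rw [Real.norm_eq_abs, abs_mul, abs_of_nonneg (hAtn.1 i k)])
        refine (norm_tsum_le_tsum_norm hn2).trans (le_of_eq (tsum_congr fun k => ?_))
        rw [Real.norm_eq_abs, abs_mul, abs_of_nonneg (hAtn.1 i k)]
    -- Fubini pieces
    have u1 : Summable (Function.uncurry fun k j => |An i k - Atn i k| * P k j) := by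
      apply summable_uncurry_of
      · intro k j; exact mul_nonneg (abs_nonneg _) (hP.1 k j)
      · intro k; exact (stoch_summable hP k).mul_left _
      · simpa [tsum_mul_left, hP.2] using hdiff
    have u2 : Summable (Function.uncurry fun k j => Atn i k * |P k j - Pt k j|) := by
      apply summable_uncurry_of
      · intro k j; exact mul_nonneg (hAtn.1 i k) (abs_nonneg _)
      · intro k; exact (rowDiff_summable hP hPt k).mul_left _
      · apply Summable.of_nonneg_of_le
          (fun k => tsum_nonneg fun j => mul_nonneg (hAtn.1 i k) (abs_nonneg _))
          (fun k => ?_) ((stoch_summable hAtn i).mul_right C)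
        rw [tsum_mul_left]
        exact mul_le_mul_of_nonneg_left (hC k) (hAtn.1 i k)
    have s1 : Summable fun j => ∑' k, |An i k - Atn i k| * P k j := u1.prod_symm.prod
    have s2 : Summable fun j => ∑' k, Atn i k * |P k j - Pt k j| := u2.prod_symm.prod
    have hLHS : Summable fun j => |matPow P (n+1) i j - matPow Pt (n+1) i j| :=
      rowDiff_summable hAn1 hAtn1 i
    have e1 : (∑' j, ∑' k, |An i k - Atn i k| * P k j) = ∑' k, |An i k - Atn i k| := by
      rw [Summable.tsum_comm u1]
      simp [tsum_mul_left, hP.2]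
    have e2 : (∑' j, ∑' k, Atn i k * |P k j - Pt k j|) ≤ C := by
      rw [Summable.tsum_comm u2]
      calc (∑' k, ∑' j, Atn i k * |P k j - Pt k j|)
          = ∑' k, Atn i k * ∑' j, |P k j - Pt k j| := by
            exact tsum_congr fun k => tsum_mul_left
        _ ≤ ∑' k, Atn i k * C := by
            refine Summable.tsum_le_tsum (fun k => mul_le_mul_of_nonneg_left (hC k) (hAtn.1 i k)) ?_
              ((stoch_summable hAtn i).mul_right C)
            · apply Summable.of_nonneg_of_le
                (fun k => mul_nonneg (hAtn.1 i k) (tsum_nonneg fun j => abs_nonneg _))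
                (fun k => mul_le_mul_of_nonneg_left (hC k) (hAtn.1 i k))
                ((stoch_summable hAtn i).mul_right C)
        _ = C := by rw [tsum_mul_right, hAtn.2, one_mul]
    calc ∑' j, |matPow P (n+1) i j - matPow Pt (n+1) i j|
        ≤ ∑' j, ((∑' k, |An i k - Atn i k| * P k j) + ∑' k, Atn i k * |P k j - Pt k j|) :=
          Summable.tsum_le_tsum ptwise hLHS (s1.add s2)
      _ = (∑' j, ∑' k, |An i k - Atn i k| * P k j)
            + ∑' j, ∑' k, Atn i k * |P k j - Pt k j| := Summable.tsum_add s1 s2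
      _ ≤ n * C + C := add_le_add (e1 ▸ IH i) e2
      _ = (n + 1 : ℕ) * C := by push_cast; ring


/-- with δ_m(k) = inf_i P^m(i,k), if ∑_k δ_m(k) > 0 then
‖ν − π‖ ≤ ‖P^m − P̃^m‖/∑_k δ_m(k) ≤ (m/∑_k δ_m(k))·‖P̃ − P‖. -/
theorem stmt3 {E : Type*} [Countable E] (P Pt : E → E → ℝ) (pi nu : E → ℝ) (m : ℕ)
    (hP : IsStochastic P) (hPt : IsStochastic Pt)
    (hPirr : IsIrred P) (hPtirr : IsIrred Pt)
    (hpi : IsProbVec pi) (hnu : IsProbVec nu)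
    (hpiinv : InvariantFor pi P) (hnuinv : InvariantFor nu Pt)
    (hm : 1 ≤ m)
    (hpos : 0 < ∑' k, ⨅ i, matPow P m i k) :
    vecNorm (fun i => nu i - pi i) ≤
        rowSumNorm (fun i j => matPow P m i j - matPow Pt m i j) /
          (∑' k, ⨅ i, matPow P m i k) ∧
      rowSumNorm (fun i j => matPow P m i j - matPow Pt m i j) /
          (∑' k, ⨅ i, matPow P m i k) ≤
        (m / ∑' k, ⨅ i, matPow P m i k) * rowSumNorm (fun i j => Pt i j - P i j) := by
  rcases isEmpty_or_nonempty E with hE | hE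
  · rw [tsum_empty] at hpos
    exact absurd hpos (lt_irrefl 0)
  have i₀ : E := hE.some
  set A := matPow P m with hAdef
  set At := matPow Pt m with hAtdef
  have hA : IsStochastic A := matPow_stoch hP m
  have hAt : IsStochastic At := matPow_stoch hPt m
  set δ : E → ℝ := fun k => ⨅ i, A i k with hδdef
  set d : ℝ := ∑' k, δ k with hddef
  have hd0 : 0 < d := hpos
  have hδ0 : ∀ k, 0 ≤ δ k := fun k => le_ciInf fun i => hA.1 i k
  have hbb : ∀ k, BddBelow (Set.range fun i => A i k) := fun k =>
    ⟨0, by rintro x ⟨i, rfl⟩; exact hA.1 i k⟩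
  have hδle : ∀ i k, δ k ≤ A i k := fun i k => ciInf_le (hbb k) i
  have hδsum : Summable δ :=
    Summable.of_nonneg_of_le hδ0 (fun k => hδle i₀ k) (stoch_summable hA i₀)
  -- row sums of the difference
  have hrowΔ : ∀ i, Summable fun j => |A i j - At i j| := fun i => rowDiff_summable hA hAt i
  have hrow2 : ∀ i, (∑' j, |A i j - At i j|) ≤ 2 := by
    intro i
    calc (∑' j, |A i j - At i j|) ≤ ∑' j, (A i j + At i j) := by
          refine Summable.tsum_le_tsum (fun j => ?_) (hrowΔ i)
            ((stoch_summable hA i).add (stoch_summable hAt i))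
          refine (abs_sub _ _).trans ?_
          rw [abs_of_nonneg (hA.1 i j), abs_of_nonneg (hAt.1 i j)]
      _ = 2 := by
          rw [Summable.tsum_add (stoch_summable hA i) (stoch_summable hAt i), hA.2, hAt.2]; norm_num
  have hDbdd : BddAbove (Set.range fun i => ∑' j, |A i j - At i j|) :=
    ⟨2, by rintro x ⟨i, rfl⟩; exact hrow2 i⟩
  set D : ℝ := rowSumNorm (fun i j => A i j - At i j) with hDdef
  have hrowD : ∀ i, (∑' j, |A i j - At i j|) ≤ D := fun i => le_ciSup hDbdd i
  -- the signed measure μ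
  have hnusum := probvec_summable hnu
  have hpisum := probvec_summable hpi
  set μ : E → ℝ := fun i => nu i - pi i with hμdef
  have hμsum : Summable μ := hnusum.sub hpisum
  have hμabs : Summable fun i => |μ i| := hμsum.abs
  have hμtot : ∑' i, μ i = 0 := by
    rw [hμdef, Summable.tsum_sub hnusum hpisum, hnu.2, hpi.2]; ring
  have hinvA : ∀ j, HasSum (fun i => pi i * A i j) (pi j) := invariant_matPow hpi hP hpiinv m
  have hinvAt : ∀ j, HasSum (fun i => nu i * At i j) (nu j) := invariant_matPow hnu hPt hnuinv m
  have sνA : ∀ j, Summable fun i => nu i * A i j := fun j =>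
    Summable.of_nonneg_of_le (fun i => mul_nonneg (hnu.1 i) (hA.1 i j))
      (fun i => by nlinarith [stoch_le_one hA i j, hnu.1 i]) hnusum
  have sπA : ∀ j, Summable fun i => pi i * A i j := fun j => (hinvA j).summable
  have sνAt : ∀ j, Summable fun i => nu i * At i j := fun j => (hinvAt j).summable
  have sμA : ∀ j, Summable fun i => μ i * A i j := fun j =>
    (((sνA j).sub (sπA j)).congr (fun i => by simp [hμdef]; ring))
  have sνΔ : ∀ j, Summable fun i => nu i * (At i j - A i j) := fun j =>
    (((sνAt j).sub (sνA j)).congr (fun i => by ring))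
  have eq1 : ∀ j, μ j = (∑' i, μ i * A i j) + ∑' i, nu i * (At i j - A i j) := by
    intro j
    have h1 : (∑' i, μ i * A i j) = (∑' i, nu i * A i j) - ∑' i, pi i * A i j := by
      rw [← Summable.tsum_sub (sνA j) (sπA j)]
      exact tsum_congr fun i => by simp [hμdef]; ring
    have h2 : (∑' i, nu i * (At i j - A i j)) = (∑' i, nu i * At i j) - ∑' i, nu i * A i j := by
      rw [← Summable.tsum_sub (sνAt j) (sνA j)]
      exact tsum_congr fun i => by ring
    rw [h1, h2, (hinvA j).tsum_eq, (hinvAt j).tsum_eq]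
    show nu j - pi j = _
    ring
  -- Dobrushin bound for the first term
  have sabs1 : ∀ j, Summable fun i => |μ i| * (A i j - δ j) := by
    intro j
    apply Summable.of_nonneg_of_le
      (fun i => mul_nonneg (abs_nonneg _) (sub_nonneg.2 (hδle i j)))
      (fun i => ?_) hμabs
    nlinarith [stoch_le_one hA i j, hδ0 j, abs_nonneg (μ i), hδle i j]
  have T1bound : ∀ j, |∑' i, μ i * A i j| ≤ ∑' i, |μ i| * (A i j - δ j) := by
    intro j
    have T1eq : (∑' i, μ i * A i j) = ∑' i, μ i * (A i j - δ j) := by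
      have : (∑' i, μ i * (A i j - δ j)) = (∑' i, μ i * A i j) - ∑' i, μ i * δ j := by
        rw [← Summable.tsum_sub (sμA j) (hμsum.mul_right (δ j))]
        exact tsum_congr fun i => by ring
      rw [this, tsum_mul_right, hμtot, zero_mul, sub_zero]
    rw [T1eq]
    have hs : Summable fun i => ‖μ i * (A i j - δ j)‖ :=
      (sabs1 j).congr fun i => by
        rw [Real.norm_eq_abs, abs_mul, abs_of_nonneg (sub_nonneg.2 (hδle i j))]
    refine (norm_tsum_le_tsum_norm hs).trans (le_of_eq (tsum_congr fun i => ?_))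
    rw [Real.norm_eq_abs, abs_mul, abs_of_nonneg (sub_nonneg.2 (hδle i j))]
  have sabs2 : ∀ j, Summable fun i => nu i * |A i j - At i j| := by
    intro j
    apply Summable.of_nonneg_of_le
      (fun i => mul_nonneg (hnu.1 i) (abs_nonneg _))
      (fun i => ?_) (hnusum.mul_right 2)
    have h1 := abs_sub (A i j) (At i j)
    rw [abs_of_nonneg (hA.1 i j), abs_of_nonneg (hAt.1 i j)] at h1
    nlinarith [hnu.1 i, stoch_le_one hA i j, stoch_le_one hAt i j, abs_nonneg (A i j - At i j)]
  have T2bound : ∀ j, |∑' i, nu i * (At i j - A i j)| ≤ ∑' i, nu i * |A i j - At i j| := by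
    intro j
    have hs : Summable fun i => ‖nu i * (At i j - A i j)‖ :=
      (sabs2 j).congr fun i => by
        rw [Real.norm_eq_abs, abs_mul, abs_of_nonneg (hnu.1 i), abs_sub_comm]
    refine (norm_tsum_le_tsum_norm hs).trans (le_of_eq (tsum_congr fun i => ?_))
    rw [Real.norm_eq_abs, abs_mul, abs_of_nonneg (hnu.1 i), abs_sub_comm]
  -- Fubini for the two dominating terms
  have rowsub : ∀ i, (∑' j, (A i j - δ j)) = 1 - d := by
    intro i
    rw [Summable.tsum_sub (stoch_summable hA i) hδsum, hA.2, hddef]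
  have u1 : Summable (Function.uncurry fun i j => |μ i| * (A i j - δ j)) := by
    apply summable_uncurry_of
    · intro i j; exact mul_nonneg (abs_nonneg _) (sub_nonneg.2 (hδle i j))
    · intro i; exact ((stoch_summable hA i).sub hδsum).mul_left _
    · exact (hμabs.mul_right (1 - d)).congr fun i => by
        rw [← rowsub i, ← tsum_mul_left]
  have g1sum : Summable fun j => ∑' i, |μ i| * (A i j - δ j) := u1.prod_symm.prod
  have g1val : (∑' j, ∑' i, |μ i| * (A i j - δ j)) = (1 - d) * ∑' i, |μ i| := by
    rw [Summable.tsum_comm u1]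
    calc (∑' i, ∑' j, |μ i| * (A i j - δ j)) = ∑' i, |μ i| * (1 - d) :=
          tsum_congr fun i => by rw [tsum_mul_left, rowsub i]
      _ = (1 - d) * ∑' i, |μ i| := by rw [tsum_mul_right, mul_comm]
  have u2 : Summable (Function.uncurry fun i j => nu i * |A i j - At i j|) := by
    apply summable_uncurry_of
    · intro i j; exact mul_nonneg (hnu.1 i) (abs_nonneg _)
    · intro i; exact (hrowΔ i).mul_left _
    · apply Summable.of_nonneg_of_le
        (fun i => tsum_nonneg fun j => mul_nonneg (hnu.1 i) (abs_nonneg _))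
        (fun i => ?_) (hnusum.mul_right D)
      rw [tsum_mul_left]
      exact mul_le_mul_of_nonneg_left (hrowD i) (hnu.1 i)
  have g2sum : Summable fun j => ∑' i, nu i * |A i j - At i j| := u2.prod_symm.prod
  have g2val : (∑' j, ∑' i, nu i * |A i j - At i j|) ≤ D := by
    rw [Summable.tsum_comm u2]
    calc (∑' i, ∑' j, nu i * |A i j - At i j|) = ∑' i, nu i * ∑' j, |A i j - At i j| :=
          tsum_congr fun i => tsum_mul_left
      _ ≤ ∑' i, nu i * D := by
          refine Summable.tsum_le_tsum (fun i => mul_le_mul_of_nonneg_left (hrowD i) (hnu.1 i))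
            ?_ (hnusum.mul_right D)
          apply Summable.of_nonneg_of_le
            (fun i => mul_nonneg (hnu.1 i) (tsum_nonneg fun j => abs_nonneg _))
            (fun i => mul_le_mul_of_nonneg_left (hrowD i) (hnu.1 i)) (hnusum.mul_right D)
      _ = D := by rw [tsum_mul_right, hnu.2, one_mul]
  -- main inequality
  set N : ℝ := ∑' i, |μ i| with hNdef
  have hN0 : 0 ≤ N := tsum_nonneg fun i => abs_nonneg _
  have main : N ≤ (1 - d) * N + D := by
    calc N = ∑' j, |μ j| := rfl
      _ ≤ ∑' j, ((∑' i, |μ i| * (A i j - δ j)) + ∑' i, nu i * |A i j - At i j|) := by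
          refine Summable.tsum_le_tsum (fun j => ?_) hμabs (g1sum.add g2sum)
          calc |μ j| = |(∑' i, μ i * A i j) + ∑' i, nu i * (At i j - A i j)| := by rw [← eq1 j]
            _ ≤ |∑' i, μ i * A i j| + |∑' i, nu i * (At i j - A i j)| := abs_add_le _ _
            _ ≤ _ := add_le_add (T1bound j) (T2bound j)
      _ = (∑' j, ∑' i, |μ i| * (A i j - δ j)) + ∑' j, ∑' i, nu i * |A i j - At i j| :=
          Summable.tsum_add g1sum g2sum
      _ ≤ (1 - d) * N + D := by rw [g1val]; exact add_le_add_right g2val _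
  have hdN : d * N ≤ D := by nlinarith [main]
  constructor
  · show N ≤ D / d
    rw [le_div_iff₀ hd0]
    nlinarith [hdN]
  · -- part (b)
    set C : ℝ := rowSumNorm (fun i j => Pt i j - P i j) with hCdef
    have hrowPPt : ∀ k, Summable fun j => |Pt k j - P k j| := fun k => rowDiff_summable hPt hP k
    have hrowPPt2 : ∀ k, (∑' j, |Pt k j - P k j|) ≤ 2 := by
      intro k
      calc (∑' j, |Pt k j - P k j|) ≤ ∑' j, (Pt k j + P k j) := by
            refine Summable.tsum_le_tsum (fun j => ?_) (hrowPPt k)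
              ((stoch_summable hPt k).add (stoch_summable hP k))
            refine (abs_sub _ _).trans ?_
            rw [abs_of_nonneg (hPt.1 k j), abs_of_nonneg (hP.1 k j)]
        _ = 2 := by
            rw [Summable.tsum_add (stoch_summable hPt k) (stoch_summable hP k), hPt.2, hP.2]; norm_num
    have hCbdd : BddAbove (Set.range fun k => ∑' j, |Pt k j - P k j|) :=
      ⟨2, by rintro x ⟨k, rfl⟩; exact hrowPPt2 k⟩
    have hCle : ∀ k, (∑' j, |P k j - Pt k j|) ≤ C := by
      intro k
      have : (∑' j, |P k j - Pt k j|) = ∑' j, |Pt k j - P k j| :=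
        tsum_congr fun j => abs_sub_comm _ _
      rw [this]
      exact le_ciSup hCbdd k
    have hC0 : 0 ≤ C :=
      le_trans (tsum_nonneg fun j => abs_nonneg _) (le_ciSup hCbdd i₀)
    have hDmC : D ≤ m * C := by
      refine ciSup_le fun i => ?_
      exact pow_diff_row_le hP hPt hC0 hCle m i
    calc D / d ≤ (m * C) / d := (div_le_div_iff_of_pos_right hd0).2 hDmC
      _ = (m / d) * C := by ring


end
end

section
/- Let E be a countable set, P an irreducible stochastic matrix on E, and π an invariant probability vector for P. Then the following are equivalent: (a) for every i,j the series D(i,j) = ∑_{n=0}^∞ (P^n(i,j) − π(j)) converges and sup_i ∑_j |D(i,j)| < ∞; (b) P is uniformly ergodic, i.e. sup_i ∑_j |P^n(i,j) − π(j)| → 0 as n → ∞. -/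
open scoped Classical ENNReal NNReal
open Filter MeasureTheory
open Topology

noncomputable section

variable {E : Type*}

/-- Fubini helper for nonneg reals. -/
lemma swap_nn {α β : Type*} {f : α → β → ℝ} (h0 : ∀ a b, 0 ≤ f a b)
    (h1 : ∀ a, Summable (f a)) (h2 : Summable fun a => ∑' b, f a b) :
    (∀ b, Summable fun a => f a b) ∧ (Summable fun b => ∑' a, f a b) ∧
      (∑' b, ∑' a, f a b = ∑' a, ∑' b, f a b) := by
  have hu : Summable (Function.uncurry f) :=
    (summable_prod_of_nonneg (fun p => h0 p.1 p.2)).mpr ⟨h1, h2⟩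
  have hs : Summable fun p : β × α => f p.2 p.1 := hu.prod_symm
  refine ⟨fun b => hs.prod_factor b, hs.prod, Summable.tsum_comm hu⟩

section Basic

variable {P : E → E → ℝ} {pi : E → ℝ}

lemma summable_of_tsum_one {f : E → ℝ} (h : ∑' j, f j = 1) : Summable f := by
  by_contra hc
  rw [tsum_eq_zero_of_not_summable hc] at h
  norm_num at h

lemma matPow_nonneg (hP : IsStochastic P) : ∀ n i j, 0 ≤ matPow P n i j := by
  intro n
  induction n with
  | zero => intro i j; simp only [matPow]; split <;> norm_num
  | succ n ih =>
    intro i j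
    exact tsum_nonneg fun k => mul_nonneg (ih i k) (hP.1 k j)

lemma matPow_rowsum (hP : IsStochastic P) : ∀ n i, HasSum (matPow P n i) 1 := by
  intro n
  induction n with
  | zero =>
    intro i
    have : (fun j => matPow P 0 i j) = fun j => if j = i then (1:ℝ) else 0 := by
      funext j; simp only [matPow]; by_cases h : i = j <;> simp [h, eq_comm]
    simpa [this] using hasSum_ite_eq i (1:ℝ)
  | succ n ih =>
    intro i
    have hA : HasSum (matPow P n i) 1 := ih i
    have hAs : Summable (matPow P n i) := hA.summable
    have hAnn : ∀ k, 0 ≤ matPow P n i k := fun k => matPow_nonneg hP n i k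
    have hPs : ∀ k, Summable (P k) := fun k => summable_of_tsum_one (hP.2 k)
    have h0 : ∀ k j, 0 ≤ matPow P n i k * P k j :=
      fun k j => mul_nonneg (hAnn k) (hP.1 k j)
    have h1 : ∀ k, Summable fun j => matPow P n i k * P k j :=
      fun k => (hPs k).mul_left _
    have h2 : Summable fun k => ∑' j, matPow P n i k * P k j := by
      have : (fun k => ∑' j, matPow P n i k * P k j) = matPow P n i := by
        funext k; rw [tsum_mul_left, hP.2 k, mul_one]
      rw [this]; exact hAs
    obtain ⟨hb, hsum, hcomm⟩ := swap_nn h0 h1 h2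
    have hts : ∑' j, ∑' k, matPow P n i k * P k j = 1 := by
      rw [hcomm]
      have : (fun k => ∑' j, matPow P n i k * P k j) = matPow P n i := by
        funext k; rw [tsum_mul_left, hP.2 k, mul_one]
      rw [this, hA.tsum_eq]
    have : Summable fun j => ∑' k, matPow P n i k * P k j := hsum
    have := this.hasSum
    rw [hts] at this
    exact this

lemma matPow_summable (hP : IsStochastic P) (n : ℕ) (i : E) :
    Summable (matPow P n i) := (matPow_rowsum hP n i).summable

lemma matPow_tsum (hP : IsStochastic P) (n : ℕ) (i : E) :
    ∑' j, matPow P n i j = 1 := (matPow_rowsum hP n i).tsum_eq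

lemma matPow_le_one (hP : IsStochastic P) (n : ℕ) (i j : E) :
    matPow P n i j ≤ 1 := by
  have := Summable.le_tsum (matPow_summable hP n i) j
    (fun k _ => matPow_nonneg hP n i k)
  rw [matPow_tsum hP n i] at this
  exact this


lemma P_le_one (hP : IsStochastic P) (i j : E) : P i j ≤ 1 := by
  have := Summable.le_tsum (summable_of_tsum_one (hP.2 i)) j (fun k _ => hP.1 i k)
  rw [hP.2 i] at this
  exact this

lemma matPow_CK (hP : IsStochastic P) (m : ℕ) :
    ∀ n i j, matPow P (m + n) i j = ∑' k, matPow P m i k * matPow P n k j := by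
  intro n
  induction n with
  | zero =>
    intro i j
    rw [Nat.add_zero]
    symm
    rw [tsum_eq_single j]
    · simp [matPow]
    · intro k hk; simp [matPow, hk]
  | succ n ih =>
    intro i j
    have key : matPow P (m + (n+1)) i j = ∑' l, matPow P (m+n) i l * P l j := rfl
    rw [key]
    have h0 : ∀ l k, 0 ≤ matPow P m i k * matPow P n k l * P l j := fun l k =>
      mul_nonneg (mul_nonneg (matPow_nonneg hP m i k) (matPow_nonneg hP n k l)) (hP.1 l j)
    have hsum_k : ∀ l, Summable fun k => matPow P m i k * matPow P n k l := fun l =>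
      Summable.of_nonneg_of_le
        (fun k => mul_nonneg (matPow_nonneg hP m i k) (matPow_nonneg hP n k l))
        (fun k => mul_le_of_le_one_right (matPow_nonneg hP m i k) (matPow_le_one hP n k l))
        (matPow_summable hP m i)
    have h1 : ∀ l, Summable fun k => matPow P m i k * matPow P n k l * P l j := fun l =>
      (hsum_k l).mul_right _
    have h2 : Summable fun l => ∑' k, matPow P m i k * matPow P n k l * P l j := by
      have he : (fun l => ∑' k, matPow P m i k * matPow P n k l * P l j)
          = fun l => matPow P (m+n) i l * P l j := by
        funext l
        rw [Summable.tsum_mul_right _ (hsum_k l), ← ih i l]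
      rw [he]
      exact Summable.of_nonneg_of_le
        (fun l => mul_nonneg (matPow_nonneg hP (m+n) i l) (hP.1 l j))
        (fun l => mul_le_of_le_one_right (matPow_nonneg hP (m+n) i l) (P_le_one hP l j))
        (matPow_summable hP (m+n) i)
    obtain ⟨hb, hsum, hcomm⟩ := swap_nn h0 h1 h2
    calc ∑' l, matPow P (m+n) i l * P l j
        = ∑' l, ∑' k, matPow P m i k * matPow P n k l * P l j := by
          apply tsum_congr; intro l
          rw [Summable.tsum_mul_right _ (hsum_k l), ← ih i l]
      _ = ∑' k, ∑' l, matPow P m i k * matPow P n k l * P l j := hcomm.symm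
      _ = ∑' k, matPow P m i k * matPow P (n+1) k j := by
          apply tsum_congr; intro k
          have : (fun l => matPow P m i k * matPow P n k l * P l j)
              = fun l => matPow P m i k * (matPow P n k l * P l j) := by
            funext l; ring
          rw [this, tsum_mul_left]
          rfl

lemma pi_summable (hpi : IsProbVec pi) : Summable pi := summable_of_tsum_one hpi.2

lemma piPow (hP : IsStochastic P) (hpi : IsProbVec pi) (hpiinv : InvariantFor pi P) :
    ∀ n j, HasSum (fun i => pi i * matPow P n i j) (pi j) := by
  intro n
  induction n with
  | zero =>
    intro j
    have : (fun i => pi i * matPow P 0 i j) = fun i => if i = j then pi j else 0 := by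
      funext i
      by_cases h : i = j <;> simp [matPow, h]
    rw [this]
    exact hasSum_ite_eq j (pi j)
  | succ n ih =>
    intro j
    -- goal: HasSum (fun i => pi i * matPow P (n+1) i j) (pi j)
    have hsum_row : ∀ i, Summable fun k => matPow P n i k * P k j := fun i =>
      Summable.of_nonneg_of_le
        (fun k => mul_nonneg (matPow_nonneg hP n i k) (hP.1 k j))
        (fun k => mul_le_of_le_one_right (matPow_nonneg hP n i k) (P_le_one hP k j))
        (matPow_summable hP n i)
    have h0 : ∀ i k, 0 ≤ pi i * (matPow P n i k * P k j) := fun i k =>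
      mul_nonneg (hpi.1 i) (mul_nonneg (matPow_nonneg hP n i k) (hP.1 k j))
    have h1 : ∀ i, Summable fun k => pi i * (matPow P n i k * P k j) := fun i =>
      (hsum_row i).mul_left _
    have hS : Summable fun i => pi i * matPow P (n+1) i j :=
      Summable.of_nonneg_of_le
        (fun i => mul_nonneg (hpi.1 i) (matPow_nonneg hP (n+1) i j))
        (fun i => mul_le_of_le_one_right (hpi.1 i) (matPow_le_one hP (n+1) i j))
        (pi_summable hpi)
    have h2 : Summable fun i => ∑' k, pi i * (matPow P n i k * P k j) := by
      have he : (fun i => ∑' k, pi i * (matPow P n i k * P k j))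
          = fun i => pi i * matPow P (n+1) i j := by
        funext i; rw [tsum_mul_left]; rfl
      rw [he]; exact hS
    obtain ⟨hb, hsum, hcomm⟩ := swap_nn h0 h1 h2
    have hts : ∑' i, pi i * matPow P (n+1) i j = pi j := by
      have he : (fun i => pi i * matPow P (n+1) i j)
          = fun i => ∑' k, pi i * (matPow P n i k * P k j) := by
        funext i; rw [tsum_mul_left]; rfl
      rw [he, ← hcomm]
      calc ∑' k, ∑' i, pi i * (matPow P n i k * P k j)
          = ∑' k, (∑' i, pi i * matPow P n i k) * P k j := by
            apply tsum_congr; intro k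
            rw [← Summable.tsum_mul_right _ (ih k).summable]
            apply tsum_congr; intro i; ring
        _ = ∑' k, pi k * P k j := by
            apply tsum_congr; intro k; rw [(ih k).tsum_eq]
        _ = pi j := (hpiinv j).tsum_eq
    have := hS.hasSum
    rw [hts] at this
    exact this

lemma pi_pos (hP : IsStochastic P) (hPirr : IsIrred P) (hpi : IsProbVec pi)
    (hpiinv : InvariantFor pi P) (j : E) : 0 < pi j := by
  have hex : ∃ i0, 0 < pi i0 := by
    by_contra hc
    push_neg at hc
    have : ∀ i, pi i = 0 := fun i => le_antisymm (hc i) (hpi.1 i)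
    have h1 : ∑' i, pi i = 0 := by simp [this]
    rw [hpi.2] at h1; norm_num at h1
  obtain ⟨i0, hi0⟩ := hex
  obtain ⟨n, _, hn⟩ := hPirr i0 j
  have hhs := piPow hP hpi hpiinv n j
  have hterm : pi i0 * matPow P n i0 j ≤ pi j := by
    have := Summable.le_tsum hhs.summable i0
      (fun k _ => mul_nonneg (hpi.1 k) (matPow_nonneg hP n k j))
    rwa [hhs.tsum_eq] at this
  exact lt_of_lt_of_le (mul_pos hi0 hn) hterm

end Basic

def hitP (P : E → E → ℝ) (j0 : E) : ℕ → E → ℝ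
  | 0 => fun i => if i = j0 then 1 else 0
  | t + 1 => fun i => if i = j0 then 0 else ∑' k, P i k * hitP P j0 t k

section Hit
variable {P : E → E → ℝ} {pi : E → ℝ} {j0 : E}

lemma hit_nonneg_le_one (hP : IsStochastic P) (j0 : E) : ∀ t i, 0 ≤ hitP P j0 t i ∧ hitP P j0 t i ≤ 1 := by
  intro t
  induction t with
  | zero => intro i; constructor <;> · simp only [hitP]; split <;> norm_num
  | succ t ih =>
    intro i
    by_cases h : i = j0
    · simp [hitP, h]
    · have hs : Summable fun k => P i k * hitP P j0 t k :=
        Summable.of_nonneg_of_le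
          (fun k => mul_nonneg (hP.1 i k) (ih k).1)
          (fun k => mul_le_of_le_one_right (hP.1 i k) (ih k).2)
          (summable_of_tsum_one (hP.2 i))
      constructor
      · simp only [hitP, h, if_false]
        exact tsum_nonneg fun k => mul_nonneg (hP.1 i k) (ih k).1
      · simp only [hitP, h, if_false]
        calc ∑' k, P i k * hitP P j0 t k ≤ ∑' k, P i k :=
              Summable.tsum_le_tsum (fun k => mul_le_of_le_one_right (hP.1 i k) (ih k).2)
                hs (summable_of_tsum_one (hP.2 i))
          _ = 1 := hP.2 i

lemma hit_nonneg (hP : IsStochastic P) (j0 : E) (t : ℕ) (i : E) : 0 ≤ hitP P j0 t i := (hit_nonneg_le_one hP j0 t i).1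

lemma hit_summable (hP : IsStochastic P) (j0 : E) (t : ℕ) (i : E) : Summable fun k => P i k * hitP P j0 t k :=
  Summable.of_nonneg_of_le
    (fun k => mul_nonneg (hP.1 i k) (hit_nonneg hP j0 t k))
    (fun k => mul_le_of_le_one_right (hP.1 i k) (hit_nonneg_le_one hP j0 t k).2)
    (summable_of_tsum_one (hP.2 i))

lemma hit_partial_le_one (hP : IsStochastic P) (j0 : E) : ∀ T i, ∑ t ∈ Finset.range T, hitP P j0 t i ≤ 1 := by
  intro T
  induction T with
  | zero => intro i; simp
  | succ T ih =>
    intro i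
    rw [Finset.sum_range_succ']
    by_cases h : i = j0
    · have hz : ∀ t, hitP P j0 (t + 1) i = 0 := by intro t; simp [hitP, h]
      simp only [hz, Finset.sum_const_zero, zero_add]
      simp [hitP, h]
    · have h0 : hitP P j0 0 i = 0 := by simp [hitP, h]
      rw [h0, add_zero]
      have he : ∀ t, hitP P j0 (t + 1) i = ∑' k, P i k * hitP P j0 t k := by
        intro t; simp [hitP, h]
      calc ∑ t ∈ Finset.range T, hitP P j0 (t + 1) i
          = ∑ t ∈ Finset.range T, ∑' k, P i k * hitP P j0 t k := by
            apply Finset.sum_congr rfl; intro t _; exact he t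
        _ = ∑' k, ∑ t ∈ Finset.range T, P i k * hitP P j0 t k := by
            rw [Summable.tsum_finsetSum (fun t _ => hit_summable hP j0 t i)]
        _ = ∑' k, P i k * ∑ t ∈ Finset.range T, hitP P j0 t k := by
            apply tsum_congr; intro k; rw [Finset.mul_sum]
        _ ≤ ∑' k, P i k := by
            apply Summable.tsum_le_tsum
            · intro k
              exact mul_le_of_le_one_right (hP.1 i k) (ih k)
            · apply Summable.of_nonneg_of_le
                (fun k => mul_nonneg (hP.1 i k)
                  (Finset.sum_nonneg fun t _ => hit_nonneg hP j0 t k))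
                (fun k => mul_le_of_le_one_right (hP.1 i k) (ih k))
                (summable_of_tsum_one (hP.2 i))
            · exact summable_of_tsum_one (hP.2 i)
        _ = 1 := hP.2 i

lemma matPow_one (i j : E) : matPow P 1 i j = P i j := by
  show ∑' k, matPow P 0 i k * P k j = P i j
  rw [tsum_eq_single i]
  · simp [matPow]
  · intro k hk; simp [matPow, Ne.symm hk]

lemma matPow_succ_left (hP : IsStochastic P) (n : ℕ) (i j : E) :
    matPow P (n + 1) i j = ∑' k, P i k * matPow P n k j := by
  have h := matPow_CK hP 1 n i j
  rw [show 1 + n = n + 1 by omega] at h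
  rw [h]
  apply tsum_congr; intro k; rw [matPow_one]

lemma hit_decomp (hP : IsStochastic P) (j0 : E) : ∀ n i, matPow P n i j0
    = ∑ t ∈ Finset.range (n + 1), hitP P j0 t i * matPow P (n - t) j0 j0 := by
  intro n
  induction n with
  | zero =>
    intro i
    simp [matPow, hitP]
  | succ n ih =>
    intro i
    by_cases h : i = j0
    · subst h
      rw [Finset.sum_range_succ']
      have hz : ∀ t, hitP P i (t + 1) i = 0 := by intro t; simp [hitP]
      simp only [hz, zero_mul, Finset.sum_const_zero, zero_add]
      simp [hitP]
    · rw [matPow_succ_left hP n i j0]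
      have he : ∀ k, matPow P n k j0
          = ∑ t ∈ Finset.range (n + 1), hitP P j0 t k * matPow P (n - t) j0 j0 := ih
      calc ∑' k, P i k * matPow P n k j0
          = ∑' k, ∑ t ∈ Finset.range (n + 1),
              P i k * (hitP P j0 t k * matPow P (n - t) j0 j0) := by
            apply tsum_congr; intro k
            rw [he k, Finset.mul_sum]
        _ = ∑ t ∈ Finset.range (n + 1),
              ∑' k, P i k * (hitP P j0 t k * matPow P (n - t) j0 j0) := by
            rw [Summable.tsum_finsetSum]
            intro t _
            have : (fun k => P i k * (hitP P j0 t k * matPow P (n - t) j0 j0))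
                = fun k => (P i k * hitP P j0 t k) * matPow P (n - t) j0 j0 := by
              funext k; ring
            rw [this]
            exact (hit_summable hP j0 t i).mul_right _
        _ = ∑ t ∈ Finset.range (n + 1),
              hitP P j0 (t + 1) i * matPow P (n - t) j0 j0 := by
            apply Finset.sum_congr rfl; intro t _
            have h1 : (fun k => P i k * (hitP P j0 t k * matPow P (n - t) j0 j0))
                = fun k => (P i k * hitP P j0 t k) * matPow P (n - t) j0 j0 := by
              funext k; ring
            rw [h1, Summable.tsum_mul_right _ (hit_summable hP j0 t i)]
            congr 1
            simp [hitP, h]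
        _ = ∑ t ∈ Finset.range (n + 1 + 1),
              hitP P j0 t i * matPow P (n + 1 - t) j0 j0 := by
            conv_rhs => rw [Finset.sum_range_succ']
            have h0 : hitP P j0 0 i = 0 := by simp [hitP, h]
            rw [h0, zero_mul, add_zero]
            apply Finset.sum_congr rfl; intro t _
            congr 2
            omega

def uSeq (P : E → E → ℝ) (pi : E → ℝ) (j0 : E) (m : ℕ) : ℝ :=
  ∑ n ∈ Finset.range m, (matPow P n j0 j0 - pi j0)

def BB (P : E → E → ℝ) (j0 : E) (N : ℕ) (i : E) : ℝ :=
  (N : ℝ) - ∑ t ∈ Finset.range N, hitP P j0 t i * ((N : ℝ) - (t : ℝ))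

lemma occ (hP : IsStochastic P) (j0 : E) : ∀ N i,
    ∑ n ∈ Finset.range N, matPow P n i j0
      = ∑ t ∈ Finset.range N, hitP P j0 t i *
          (∑ m ∈ Finset.range (N - t), matPow P m j0 j0) := by
  intro N
  induction N with
  | zero => intro i; simp
  | succ N ih =>
    intro i
    rw [Finset.sum_range_succ, ih i, hit_decomp hP j0 N i]
    have hrhs : ∑ t ∈ Finset.range (N + 1), hitP P j0 t i *
          (∑ m ∈ Finset.range (N + 1 - t), matPow P m j0 j0)
        = ∑ t ∈ Finset.range N, hitP P j0 t i *
            (∑ m ∈ Finset.range (N - t), matPow P m j0 j0)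
          + ∑ t ∈ Finset.range (N + 1), hitP P j0 t i * matPow P (N - t) j0 j0 := by
      rw [Finset.sum_range_succ, Finset.sum_range_succ]
      have h1 : ∀ t ∈ Finset.range N, hitP P j0 t i *
            (∑ m ∈ Finset.range (N + 1 - t), matPow P m j0 j0)
          = hitP P j0 t i * (∑ m ∈ Finset.range (N - t), matPow P m j0 j0)
            + hitP P j0 t i * matPow P (N - t) j0 j0 := by
        intro t ht
        have hlt : t < N := Finset.mem_range.mp ht
        have : N + 1 - t = (N - t) + 1 := by omega
        rw [this, Finset.sum_range_succ, mul_add]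
      rw [Finset.sum_congr rfl h1, Finset.sum_add_distrib]
      have : N + 1 - N = 1 := by omega
      rw [this]
      have : N - N = 0 := by omega
      rw [this]
      simp [matPow]
      ring
    rw [hrhs]

lemma SS_eq (hP : IsStochastic P) (j0 : E) (N : ℕ) (i : E) :
    ∑ n ∈ Finset.range N, (matPow P n i j0 - pi j0)
      = (∑ t ∈ Finset.range N, hitP P j0 t i * uSeq P pi j0 (N - t))
        - pi j0 * BB P j0 N i := by
  have h1 : ∑ n ∈ Finset.range N, (matPow P n i j0 - pi j0)
      = (∑ n ∈ Finset.range N, matPow P n i j0) - (N : ℝ) * pi j0 := by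
    rw [Finset.sum_sub_distrib, Finset.sum_const, Finset.card_range]
    simp [nsmul_eq_mul]
    try ring
  rw [h1, occ hP j0 N i]
  have h2 : ∀ t ∈ Finset.range N,
      hitP P j0 t i * (∑ m ∈ Finset.range (N - t), matPow P m j0 j0)
        = hitP P j0 t i * uSeq P pi j0 (N - t)
          + pi j0 * (hitP P j0 t i * ((N : ℝ) - (t : ℝ))) := by
    intro t ht
    have hlt : t < N := Finset.mem_range.mp ht
    have hu : uSeq P pi j0 (N - t)
        = (∑ m ∈ Finset.range (N - t), matPow P m j0 j0) - ((N : ℝ) - (t : ℝ)) * pi j0 := by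
      unfold uSeq
      rw [Finset.sum_sub_distrib, Finset.sum_const, Finset.card_range]
      have : ((N - t : ℕ) : ℝ) = (N : ℝ) - (t : ℝ) := by
        rw [Nat.cast_sub (le_of_lt hlt)]
      rw [nsmul_eq_mul, this]
      try ring
    rw [hu]; try ring
  rw [Finset.sum_congr rfl h2, Finset.sum_add_distrib, ← Finset.mul_sum]
  unfold BB
  ring

lemma BB_succ (j0 : E) (N : ℕ) (i : E) :
    BB P j0 (N + 1) i = BB P j0 N i + (1 - ∑ t ∈ Finset.range (N + 1), hitP P j0 t i) := by
  unfold BB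
  have h1 : ∑ t ∈ Finset.range (N + 1), hitP P j0 t i * (((N : ℕ) + 1 : ℝ) - (t : ℝ))
      = ∑ t ∈ Finset.range (N + 1), (hitP P j0 t i * ((N : ℝ) - (t : ℝ)) + hitP P j0 t i) := by
    apply Finset.sum_congr rfl; intro t _; ring
  push_cast
  rw [h1, Finset.sum_add_distrib,
    Finset.sum_range_succ (fun t => hitP P j0 t i * ((N:ℝ) - (t:ℝ))), sub_self, mul_zero,
    add_zero]
  ring

lemma BB_nonneg_mono (hP : IsStochastic P) (j0 : E) (i : E) :
    Monotone (fun N => BB P j0 N i) ∧ ∀ N, 0 ≤ BB P j0 N i := by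
  have hstep : ∀ N, BB P j0 N i ≤ BB P j0 (N + 1) i := by
    intro N
    rw [BB_succ]
    have := hit_partial_le_one hP j0 (N + 1) i
    linarith
  have hmono : Monotone fun N => BB P j0 N i := monotone_nat_of_le_succ hstep
  have h0 : BB P j0 0 i = 0 := by simp [BB]
  exact ⟨hmono, fun N => h0 ▸ hmono (Nat.zero_le N)⟩

lemma sigma_bound (hP : IsStochastic P) (j0 : E) (DD : E → ℝ) (M : ℝ)
    (hpi0 : 0 < pi j0)
    (hD : ∀ i, Tendsto (fun N => ∑ n ∈ Finset.range N, (matPow P n i j0 - pi j0))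
      atTop (𝓝 (DD i)))
    (hM : ∀ i, |DD i| ≤ M) :
    ∃ σ : ℝ, 0 ≤ σ ∧ ∀ N i,
      |∑ n ∈ Finset.range N, (matPow P n i j0 - pi j0)| ≤ σ := by
  -- bound on the diagonal partial sums
  have hu : Tendsto (fun N => |uSeq P pi j0 N|) atTop (𝓝 |DD j0|) := (hD j0).abs
  obtain ⟨c0, hc0⟩ := hu.bddAbove_range
  have hc0' : ∀ N, |uSeq P pi j0 N| ≤ c0 := fun N => hc0 (Set.mem_range_self N)
  have hc0nn : 0 ≤ c0 := le_trans (abs_nonneg _) (hc0' 0)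
  have hMnn : 0 ≤ M := le_trans (abs_nonneg _) (hM j0)
  -- bound on the A-part
  have hA : ∀ N i, |∑ t ∈ Finset.range N, hitP P j0 t i * uSeq P pi j0 (N - t)| ≤ c0 := by
    intro N i
    calc |∑ t ∈ Finset.range N, hitP P j0 t i * uSeq P pi j0 (N - t)|
        ≤ ∑ t ∈ Finset.range N, |hitP P j0 t i * uSeq P pi j0 (N - t)| :=
          Finset.abs_sum_le_sum_abs _ _
      _ ≤ ∑ t ∈ Finset.range N, hitP P j0 t i * c0 := by
          apply Finset.sum_le_sum
          intro t _
          rw [abs_mul, abs_of_nonneg (hit_nonneg hP j0 t i)]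
          exact mul_le_mul_of_nonneg_left (hc0' _) (hit_nonneg hP j0 t i)
      _ = (∑ t ∈ Finset.range N, hitP P j0 t i) * c0 := by rw [Finset.sum_mul]
      _ ≤ 1 * c0 := mul_le_mul_of_nonneg_right (hit_partial_le_one hP j0 N i) hc0nn
      _ = c0 := one_mul c0
  -- bound on B
  have hB : ∀ N i, pi j0 * BB P j0 N i ≤ c0 + M := by
    intro N i
    have hev : ∀ᶠ N' in atTop, pi j0 * BB P j0 N i
        ≤ c0 + |∑ n ∈ Finset.range N', (matPow P n i j0 - pi j0)| := by
      filter_upwards [eventually_ge_atTop N] with N' hN'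
      have hmono := (BB_nonneg_mono hP j0 i).1 hN'
      have h1 : pi j0 * BB P j0 N i ≤ pi j0 * BB P j0 N' i :=
        mul_le_mul_of_nonneg_left hmono (le_of_lt hpi0)
      have h2 := SS_eq (pi := pi) hP j0 N' i
      have h3 : pi j0 * BB P j0 N' i
          = (∑ t ∈ Finset.range N', hitP P j0 t i * uSeq P pi j0 (N' - t))
            - ∑ n ∈ Finset.range N', (matPow P n i j0 - pi j0) := by
        rw [h2]; ring
      calc pi j0 * BB P j0 N i ≤ pi j0 * BB P j0 N' i := h1
        _ ≤ |(∑ t ∈ Finset.range N', hitP P j0 t i * uSeq P pi j0 (N' - t))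
              - ∑ n ∈ Finset.range N', (matPow P n i j0 - pi j0)| := by
            rw [← h3]; exact le_abs_self _
        _ ≤ |∑ t ∈ Finset.range N', hitP P j0 t i * uSeq P pi j0 (N' - t)|
              + |∑ n ∈ Finset.range N', (matPow P n i j0 - pi j0)| := abs_sub _ _
        _ ≤ c0 + |∑ n ∈ Finset.range N', (matPow P n i j0 - pi j0)| := by
            have := hA N' i; linarith
    have hlim : Tendsto
        (fun N' => c0 + |∑ n ∈ Finset.range N', (matPow P n i j0 - pi j0)|)
        atTop (𝓝 (c0 + |DD i|)) := tendsto_const_nhds.add (hD i).abs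
    have := ge_of_tendsto hlim hev
    have := hM i
    linarith
  refine ⟨c0 + (c0 + M), by linarith, ?_⟩
  intro N i
  rw [SS_eq (pi := pi) hP j0 N i]
  have h1 := hA N i
  have h2 := hB N i
  have h3 : 0 ≤ pi j0 * BB P j0 N i :=
    mul_nonneg (le_of_lt hpi0) ((BB_nonneg_mono hP j0 i).2 N)
  calc |∑ t ∈ Finset.range N, hitP P j0 t i * uSeq P pi j0 (N - t) - pi j0 * BB P j0 N i|
      ≤ |∑ t ∈ Finset.range N, hitP P j0 t i * uSeq P pi j0 (N - t)| + |pi j0 * BB P j0 N i| :=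
        abs_sub _ _
    _ ≤ c0 + (c0 + M) := by
        rw [abs_of_nonneg h3]
        exact add_le_add h1 h2

lemma doeblin (hP : IsStochastic P) (hpi : IsProbVec pi) (j0 : E) (σ : ℝ)
    (hpi0 : 0 < pi j0) (hσ : 0 ≤ σ)
    (hS : ∀ N i, |∑ n ∈ Finset.range N, (matPow P n i j0 - pi j0)| ≤ σ)
    (hQ : Tendsto (fun n => matPow P n j0 j0) atTop (𝓝 (pi j0))) :
    ∃ L ε, 1 ≤ L ∧ 0 < ε ∧ ε ≤ 1 ∧ ∀ i, ε ≤ matPow P L i j0 := by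
  set p0 := pi j0 with hp0
  -- choose N0
  set N0 : ℕ := Nat.ceil (2 * σ / p0) + 1 with hN0
  have hN0ge : (2 * σ / p0) ≤ (N0 : ℝ) := by
    rw [hN0]; push_cast
    calc 2 * σ / p0 ≤ (Nat.ceil (2 * σ / p0) : ℝ) := Nat.le_ceil _
      _ ≤ (Nat.ceil (2 * σ / p0) : ℝ) + 1 := by linarith
  have hN0pos : 1 ≤ N0 := by omega
  -- step 1: for each i, some n < N0 has mass
  have claim1 : ∀ i, ∃ n < N0, p0 / 2 ≤ matPow P n i j0 := by
    intro i
    by_contra hc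
    push_neg at hc
    have hlt : ∑ n ∈ Finset.range N0, matPow P n i j0 < (N0 : ℝ) * (p0 / 2) := by
      have := Finset.sum_lt_sum_of_nonempty
        (s := Finset.range N0) (Finset.nonempty_range_iff.mpr (by omega)) (f := fun n => matPow P n i j0)
        (g := fun _ => p0 / 2) (fun n hn => hc n (Finset.mem_range.mp hn))
      simpa [Finset.sum_const, Finset.card_range, nsmul_eq_mul, mul_comm] using this
    have hge : (N0 : ℝ) * p0 - σ ≤ ∑ n ∈ Finset.range N0, matPow P n i j0 := by
      have h1 := hS N0 i
      have h2 : ∑ n ∈ Finset.range N0, (matPow P n i j0 - pi j0)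
          = (∑ n ∈ Finset.range N0, matPow P n i j0) - (N0 : ℝ) * p0 := by
        rw [Finset.sum_sub_distrib, Finset.sum_const, Finset.card_range, nsmul_eq_mul]
      rw [h2] at h1
      have := abs_le.mp h1
      linarith [this.1]
    have hkey : (N0 : ℝ) * (p0 / 2) ≤ (N0 : ℝ) * p0 - σ := by
      have : 2 * σ ≤ (N0 : ℝ) * p0 := by
        rw [div_le_iff₀ hpi0] at hN0ge
        linarith
      nlinarith
    linarith
  -- step 2: aperiodicity at j0
  have hev : ∀ᶠ m in atTop, p0 / 2 < matPow P m j0 j0 :=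
    hQ.eventually (eventually_gt_nhds (by linarith))
  obtain ⟨m0, hm0⟩ := eventually_atTop.mp hev
  refine ⟨N0 + m0, p0 / 2 * (p0 / 2), by omega, by positivity, ?_, ?_⟩
  · have hp1 : p0 ≤ 1 := by
      have := Summable.le_tsum (pi_summable hpi) j0 (fun k _ => hpi.1 k)
      rw [hpi.2] at this
      exact this
    nlinarith
  · intro i
    obtain ⟨n, hnlt, hn⟩ := claim1 i
    have hsplit : N0 + m0 = n + (N0 + m0 - n) := by omega
    have hCK := matPow_CK hP n (N0 + m0 - n) i j0
    rw [hsplit, hCK]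
    have hsumm : Summable fun k => matPow P n i k * matPow P (N0 + m0 - n) k j0 :=
      Summable.of_nonneg_of_le
        (fun k => mul_nonneg (matPow_nonneg hP n i k) (matPow_nonneg hP _ k j0))
        (fun k => mul_le_of_le_one_right (matPow_nonneg hP n i k) (matPow_le_one hP _ k j0))
        (matPow_summable hP n i)
    have hterm := Summable.le_tsum hsumm j0
      (fun k _ => mul_nonneg (matPow_nonneg hP n i k) (matPow_nonneg hP _ k j0))
    have hmid : p0 / 2 ≤ matPow P (N0 + m0 - n) j0 j0 := by
      have : m0 ≤ N0 + m0 - n := by omega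
      exact le_of_lt (hm0 _ this)
    calc p0 / 2 * (p0 / 2) ≤ matPow P n i j0 * matPow P (N0 + m0 - n) j0 j0 := by
          apply mul_le_mul hn hmid (by linarith) (matPow_nonneg hP n i j0)
      _ ≤ _ := hterm

lemma contraction (hP : IsStochastic P) (j0 : E) (L : ℕ) (ε : ℝ)
    (hε : 0 < ε) (hε1 : ε ≤ 1) (hdoeb : ∀ k, ε ≤ matPow P L k j0)
    (h : E → ℝ) (hsum : Summable h) (hzero : ∑' k, h k = 0) :
    ∑' j, |∑' k, h k * matPow P L k j| ≤ (1 - ε) * ∑' k, |h k| := by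
  classical
  have habs : Summable fun k => |h k| := hsum.abs
  set G : E → E → ℝ := fun k j => matPow P L k j - ε * (if j = j0 then 1 else 0) with hG
  have hGnn : ∀ k j, 0 ≤ G k j := by
    intro k j
    by_cases hj : j = j0
    · subst hj
      have := hdoeb k
      simp only [hG]
      simp
      linarith
    · simp only [hG, if_neg hj, mul_zero, sub_zero]; exact matPow_nonneg hP L k j
  have hGle : ∀ k j, G k j ≤ 1 := by
    intro k j
    have h1 : G k j ≤ matPow P L k j := by
      simp only [hG]
      have : 0 ≤ ε * (if j = j0 then (1:ℝ) else 0) := by positivity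
      linarith
    exact h1.trans (matPow_le_one hP L k j)
  have hite : Summable fun j => ε * (if j = j0 then (1:ℝ) else 0) :=
    ((hasSum_ite_eq j0 (1:ℝ)).summable).mul_left ε
  have hGsumm : ∀ k, Summable (G k) := fun k => (matPow_summable hP L k).sub hite
  have hGts : ∀ k, ∑' j, G k j = 1 - ε := by
    intro k
    simp only [hG]
    rw [Summable.tsum_sub (matPow_summable hP L k) hite, matPow_tsum hP L k, tsum_mul_left, tsum_ite_eq]
    ring
  -- rewrite the inner sums
  have hhG : ∀ j, Summable fun k => h k * G k j := by
    intro j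
    apply Summable.of_abs
    apply Summable.of_nonneg_of_le (fun k => abs_nonneg _) _ habs
    intro k
    rw [abs_mul]
    exact mul_le_of_le_one_right (abs_nonneg _) (by
      rw [abs_of_nonneg (hGnn k j)]; exact hGle k j)
  have hstep : ∀ j, ∑' k, h k * matPow P L k j = ∑' k, h k * G k j := by
    intro j
    have hsplit : (fun k => h k * matPow P L k j)
        = fun k => h k * G k j + h k * (ε * (if j = j0 then 1 else 0)) := by
      funext k; simp only [hG]; ring
    rw [hsplit, Summable.tsum_add (hhG j) ((hsum.mul_right _))]
    rw [Summable.tsum_mul_right _ hsum, hzero, zero_mul, add_zero]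
  -- Fubini setup
  have h0 : ∀ k j, 0 ≤ |h k| * G k j := fun k j => mul_nonneg (abs_nonneg _) (hGnn k j)
  have h1 : ∀ k, Summable fun j => |h k| * G k j := fun k => (hGsumm k).mul_left _
  have h2 : Summable fun k => ∑' j, |h k| * G k j := by
    have he : (fun k => ∑' j, |h k| * G k j) = fun k => |h k| * (1 - ε) := by
      funext k; rw [tsum_mul_left, hGts k]
    rw [he]
    exact habs.mul_right _
  obtain ⟨hb, hsumj, hcomm⟩ := swap_nn h0 h1 h2
  calc ∑' j, |∑' k, h k * matPow P L k j|
      = ∑' j, |∑' k, h k * G k j| := by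
        apply tsum_congr; intro j; rw [hstep j]
    _ ≤ ∑' j, ∑' k, |h k| * G k j := by
        apply Summable.tsum_le_tsum _ _ hsumj
        · intro j
          have := norm_tsum_le_tsum_norm (f := fun k => h k * G k j) (by
            have : (fun k => ‖h k * G k j‖) = fun k => |h k| * G k j := by
              funext k
              rw [Real.norm_eq_abs, abs_mul, abs_of_nonneg (hGnn k j)]
            rw [this]; exact hb j)
          rw [Real.norm_eq_abs] at this
          refine this.trans_eq ?_
          apply tsum_congr; intro k
          rw [Real.norm_eq_abs, abs_mul, abs_of_nonneg (hGnn k j)]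
        · apply Summable.of_nonneg_of_le (fun j => abs_nonneg _) _ hsumj
          intro j
          have h3 := norm_tsum_le_tsum_norm (f := fun k => h k * G k j) (by
            have : (fun k => ‖h k * G k j‖) = fun k => |h k| * G k j := by
              funext k
              rw [Real.norm_eq_abs, abs_mul, abs_of_nonneg (hGnn k j)]
            rw [this]; exact hb j)
          rw [Real.norm_eq_abs] at h3
          refine h3.trans_eq ?_
          apply tsum_congr; intro k
          rw [Real.norm_eq_abs, abs_mul, abs_of_nonneg (hGnn k j)]
    _ = ∑' k, ∑' j, |h k| * G k j := hcomm
    _ = ∑' k, |h k| * (1 - ε) := by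
        apply tsum_congr; intro k; rw [tsum_mul_left, hGts k]
    _ = (1 - ε) * ∑' k, |h k| := by
        rw [Summable.tsum_mul_right _ habs, mul_comm]

def dfun (P : E → E → ℝ) (pi : E → ℝ) (n : ℕ) (i : E) : ℝ :=
  ∑' j, |matPow P n i j - pi j|

end Hit

section Dlem
variable {P : E → E → ℝ} {pi : E → ℝ}

lemma drow_summable (hP : IsStochastic P) (hpi : IsProbVec pi) (n : ℕ) (i : E) :
    Summable fun j => |matPow P n i j - pi j| := by
  apply Summable.of_nonneg_of_le (fun j => abs_nonneg _) _
    ((matPow_summable hP n i).add (pi_summable hpi))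
  intro j
  have h1 := matPow_nonneg hP n i j
  have h2 := hpi.1 j
  rw [abs_sub_comm]
  calc |pi j - matPow P n i j| ≤ |pi j| + |matPow P n i j| := abs_sub _ _
    _ = matPow P n i j + pi j := by
        rw [abs_of_nonneg h1, abs_of_nonneg h2]; ring

lemma d_nonneg (n : ℕ) (i : E) : 0 ≤ dfun P pi n i :=
  tsum_nonneg fun j => abs_nonneg _

lemma d_le_two (hP : IsStochastic P) (hpi : IsProbVec pi) (n : ℕ) (i : E) :
    dfun P pi n i ≤ 2 := by
  unfold dfun
  have hs : Summable fun j => matPow P n i j + pi j :=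
    (matPow_summable hP n i).add (pi_summable hpi)
  calc ∑' j, |matPow P n i j - pi j| ≤ ∑' j, (matPow P n i j + pi j) := by
        apply Summable.tsum_le_tsum _ (drow_summable hP hpi n i) hs
        intro j
        have h1 := matPow_nonneg hP n i j
        have h2 := hpi.1 j
        rw [abs_sub_comm]
        calc |pi j - matPow P n i j| ≤ |pi j| + |matPow P n i j| := abs_sub _ _
          _ = matPow P n i j + pi j := by
              rw [abs_of_nonneg h1, abs_of_nonneg h2]; ring
    _ = 2 := by
        rw [Summable.tsum_add (matPow_summable hP n i) (pi_summable hpi),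
          matPow_tsum hP n i, hpi.2]
        norm_num

lemma center_expand (hP : IsStochastic P) (hpi : IsProbVec pi) (hpiinv : InvariantFor pi P)
    (n L : ℕ) (i j : E) :
    matPow P (n + L) i j - pi j
      = ∑' k, (matPow P n i k - pi k) * matPow P L k j := by
  have s1 : Summable fun k => matPow P n i k * matPow P L k j :=
    Summable.of_nonneg_of_le
      (fun k => mul_nonneg (matPow_nonneg hP n i k) (matPow_nonneg hP L k j))
      (fun k => mul_le_of_le_one_right (matPow_nonneg hP n i k) (matPow_le_one hP L k j))
      (matPow_summable hP n i)
  have s2 : Summable fun k => pi k * matPow P L k j :=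
    Summable.of_nonneg_of_le
      (fun k => mul_nonneg (hpi.1 k) (matPow_nonneg hP L k j))
      (fun k => mul_le_of_le_one_right (hpi.1 k) (matPow_le_one hP L k j))
      (pi_summable hpi)
  rw [matPow_CK hP n L i j, ← (piPow hP hpi hpiinv L j).tsum_eq, ← Summable.tsum_sub s1 s2]
  apply tsum_congr; intro k; ring

lemma hrow_summable (hP : IsStochastic P) (hpi : IsProbVec pi) (n : ℕ) (i : E) :
    Summable fun k => matPow P n i k - pi k :=
  (matPow_summable hP n i).sub (pi_summable hpi)

lemma hrow_zero (hP : IsStochastic P) (hpi : IsProbVec pi) (n : ℕ) (i : E) :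
    ∑' k, (matPow P n i k - pi k) = 0 := by
  rw [Summable.tsum_sub (matPow_summable hP n i) (pi_summable hpi), matPow_tsum hP n i, hpi.2, sub_self]

lemma d_contract (hP : IsStochastic P) (hpi : IsProbVec pi) (hpiinv : InvariantFor pi P)
    (j0 : E) (L : ℕ) (ε : ℝ) (hε : 0 < ε) (hε1 : ε ≤ 1)
    (hdoeb : ∀ k, ε ≤ matPow P L k j0) (n : ℕ) (i : E) :
    dfun P pi (n + L) i ≤ (1 - ε) * dfun P pi n i := by
  have key := contraction hP j0 L ε hε hε1 hdoeb
    (fun k => matPow P n i k - pi k) (hrow_summable hP hpi n i) (hrow_zero hP hpi n i)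
  have he : dfun P pi (n + L) i
      = ∑' j, |∑' k, (matPow P n i k - pi k) * matPow P L k j| := by
    apply tsum_congr; intro j
    rw [center_expand hP hpi hpiinv n L i j]
  rw [he]
  exact key

lemma d_iter (hP : IsStochastic P) (hpi : IsProbVec pi) (hpiinv : InvariantFor pi P)
    (j0 : E) (L : ℕ) (ε : ℝ) (hε : 0 < ε) (hε1 : ε ≤ 1)
    (hdoeb : ∀ k, ε ≤ matPow P L k j0) :
    ∀ q r i, dfun P pi (q * L + r) i ≤ 2 * (1 - ε) ^ q := by
  intro q
  induction q with
  | zero => intro r i; simpa using d_le_two hP hpi r i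
  | succ q ih =>
    intro r i
    have hsplit : (q + 1) * L + r = (q * L + r) + L := by ring
    rw [hsplit]
    calc dfun P pi ((q * L + r) + L) i ≤ (1 - ε) * dfun P pi (q * L + r) i :=
          d_contract hP hpi hpiinv j0 L ε hε hε1 hdoeb _ i
      _ ≤ (1 - ε) * (2 * (1 - ε) ^ q) :=
          mul_le_mul_of_nonneg_left (ih r i) (by linarith)
      _ = 2 * (1 - ε) ^ (q + 1) := by ring

lemma d_submult (hP : IsStochastic P) (hpi : IsProbVec pi) (hpiinv : InvariantFor pi P)
    (m n : ℕ) (i : E) (C : ℝ) (hC0 : 0 ≤ C) (hC : ∀ k, dfun P pi n k ≤ C) :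
    dfun P pi (m + n) i ≤ C * dfun P pi m i := by
  set a : E → ℝ := fun k => matPow P m i k - pi k with ha
  set b : E → E → ℝ := fun k j => matPow P n k j - pi j with hb
  have hasumm : Summable a := hrow_summable hP hpi m i
  have haabs : Summable fun k => |a k| := hasumm.abs
  have hbabs : ∀ k, Summable fun j => |b k j| := fun k => drow_summable hP hpi n k
  have hble : ∀ k j, |b k j| ≤ 2 := by
    intro k j
    have h1 := matPow_nonneg hP n k j
    have h2 := matPow_le_one hP n k j
    have h3 := hpi.1 j
    have h4 : pi j ≤ 1 := by
      have := Summable.le_tsum (pi_summable hpi) j (fun k _ => hpi.1 k)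
      rw [hpi.2] at this; exact this
    rw [abs_le]; constructor <;> simp only [hb] <;> nlinarith
  -- pointwise identity
  have hpoint : ∀ j, matPow P (m + n) i j - pi j = ∑' k, a k * b k j := by
    intro j
    have s1 : Summable fun k => matPow P m i k * matPow P n k j :=
      Summable.of_nonneg_of_le
        (fun k => mul_nonneg (matPow_nonneg hP m i k) (matPow_nonneg hP n k j))
        (fun k => mul_le_of_le_one_right (matPow_nonneg hP m i k) (matPow_le_one hP n k j))
        (matPow_summable hP m i)
    have s2 : Summable fun k => matPow P m i k * pi j :=
      (matPow_summable hP m i).mul_right _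
    have s3 : Summable fun k => pi k * matPow P n k j :=
      Summable.of_nonneg_of_le
        (fun k => mul_nonneg (hpi.1 k) (matPow_nonneg hP n k j))
        (fun k => mul_le_of_le_one_right (hpi.1 k) (matPow_le_one hP n k j))
        (pi_summable hpi)
    have s4 : Summable fun k => pi k * pi j := (pi_summable hpi).mul_right _
    have hsplit : (fun k => a k * b k j)
        = fun k => (matPow P m i k * matPow P n k j - matPow P m i k * pi j)
          - (pi k * matPow P n k j - pi k * pi j) := by
      funext k; simp only [ha, hb]; ring
    rw [hsplit, Summable.tsum_sub (s1.sub s2) (s3.sub s4), Summable.tsum_sub s1 s2, Summable.tsum_sub s3 s4]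
    rw [matPow_CK hP m n i j |>.symm, Summable.tsum_mul_right _ (matPow_summable hP m i),
      matPow_tsum hP m i, (piPow hP hpi hpiinv n j).tsum_eq,
      Summable.tsum_mul_right _ (pi_summable hpi), hpi.2]
    ring
  -- Fubini
  have h0 : ∀ k j, 0 ≤ |a k| * |b k j| := fun k j => mul_nonneg (abs_nonneg _) (abs_nonneg _)
  have h1 : ∀ k, Summable fun j => |a k| * |b k j| := fun k => (hbabs k).mul_left _
  have h2 : Summable fun k => ∑' j, |a k| * |b k j| := by
    apply Summable.of_nonneg_of_le
      (fun k => tsum_nonneg fun j => h0 k j) _ (haabs.mul_right C)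
    intro k
    rw [tsum_mul_left]
    exact mul_le_mul_of_nonneg_left (hC k) (abs_nonneg _)
  obtain ⟨hbb, hsumj, hcomm⟩ := swap_nn h0 h1 h2
  have hinner : ∀ j, |∑' k, a k * b k j| ≤ ∑' k, |a k| * |b k j| := by
    intro j
    have hs : Summable fun k => ‖a k * b k j‖ := by
      have : (fun k => ‖a k * b k j‖) = fun k => |a k| * |b k j| := by
        funext k; rw [Real.norm_eq_abs, abs_mul]
      rw [this]; exact hbb j
    have := norm_tsum_le_tsum_norm hs
    rw [Real.norm_eq_abs] at this
    refine this.trans_eq ?_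
    apply tsum_congr; intro k; rw [Real.norm_eq_abs, abs_mul]
  calc dfun P pi (m + n) i = ∑' j, |∑' k, a k * b k j| := by
        apply tsum_congr; intro j; rw [hpoint j]
    _ ≤ ∑' j, ∑' k, |a k| * |b k j| := by
        apply Summable.tsum_le_tsum hinner _ hsumj
        exact Summable.of_nonneg_of_le (fun j => abs_nonneg _) hinner hsumj
    _ = ∑' k, ∑' j, |a k| * |b k j| := hcomm
    _ ≤ ∑' k, |a k| * C := by
        apply Summable.tsum_le_tsum _ h2 (haabs.mul_right C)
        intro k
        rw [tsum_mul_left]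
        exact mul_le_mul_of_nonneg_left (hC k) (abs_nonneg _)
    _ = C * dfun P pi m i := by
        rw [Summable.tsum_mul_right _ haabs, mul_comm]
        rfl

end Dlem

section Main
variable {P : E → E → ℝ} {pi : E → ℝ}

lemma ofReal_dfun (hP : IsStochastic P) (hpi : IsProbVec pi) (n : ℕ) (i : E) :
    ∑' j, ENNReal.ofReal |matPow P n i j - pi j| = ENNReal.ofReal (dfun P pi n i) :=
  (ENNReal.ofReal_tsum_of_nonneg (fun j => abs_nonneg _) (drow_summable hP hpi n i)).symm

lemma nonempty_of_prob (hpi : IsProbVec pi) : Nonempty E := by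
  by_contra h
  rw [not_nonempty_iff] at h
  have := hpi.2
  rw [tsum_empty] at this
  norm_num at this

lemma forward_dir (hP : IsStochastic P) (hPirr : IsIrred P)
    (hpi : IsProbVec pi) (hpiinv : InvariantFor pi P) (D : E → E → ℝ)
    (hD : ∀ i j, Tendsto (fun N => ∑ n ∈ Finset.range N, (matPow P n i j - pi j))
      atTop (𝓝 (D i j)))
    (hfin : (⨆ i, ∑' j, ENNReal.ofReal |D i j|) < ⊤) :
    Tendsto (fun n => ⨆ i, ∑' j, ENNReal.ofReal |matPow P n i j - pi j|)
      atTop (𝓝 0) := by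
  have hne : Nonempty E := nonempty_of_prob hpi
  set j0 : E := Classical.arbitrary E with hj0
  have hpi0 : 0 < pi j0 := pi_pos hP hPirr hpi hpiinv j0
  set M : ℝ := (⨆ i, ∑' j, ENNReal.ofReal |D i j|).toReal with hMdef
  have hM : ∀ i, |D i j0| ≤ M := by
    intro i
    have h1 : ENNReal.ofReal |D i j0| ≤ ∑' j, ENNReal.ofReal |D i j| :=
      ENNReal.le_tsum j0
    have h2 : (∑' j, ENNReal.ofReal |D i j|) ≤ ⨆ i, ∑' j, ENNReal.ofReal |D i j| :=
      le_iSup (fun i => ∑' j, ENNReal.ofReal |D i j|) i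
    have h3 := ENNReal.toReal_mono hfin.ne (h1.trans h2)
    rwa [ENNReal.toReal_ofReal (abs_nonneg _)] at h3
  obtain ⟨σ, hσ0, hS⟩ := sigma_bound hP j0 (fun i => D i j0) M hpi0 (fun i => hD i j0) hM
  -- aperiodicity
  have hQ : Tendsto (fun n => matPow P n j0 j0) atTop (𝓝 (pi j0)) := by
    have hS0 := hD j0 j0
    have h1 : Tendsto (fun N =>
        (∑ n ∈ Finset.range (N + 1), (matPow P n j0 j0 - pi j0))
          - ∑ n ∈ Finset.range N, (matPow P n j0 j0 - pi j0)) atTop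
        (𝓝 (D j0 j0 - D j0 j0)) :=
      (hS0.comp (tendsto_add_atTop_nat 1)).sub hS0
    rw [sub_self] at h1
    have h2 : (fun N => (∑ n ∈ Finset.range (N + 1), (matPow P n j0 j0 - pi j0))
        - ∑ n ∈ Finset.range N, (matPow P n j0 j0 - pi j0))
        = fun N => matPow P N j0 j0 - pi j0 := by
      funext N
      rw [Finset.sum_range_succ]
      ring
    rw [h2] at h1
    have h3 := h1.add (tendsto_const_nhds (x := pi j0) (f := atTop))
    rw [zero_add] at h3
    simpa using h3
  obtain ⟨L, ε, hL1, hε, hε1, hdoeb⟩ := doeblin hP hpi j0 σ hpi0 hσ0 hS hQ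
  -- geometric bound
  have hbound : ∀ n i, dfun P pi n i ≤ 2 * (1 - ε) ^ (n / L) := by
    intro n i
    have hsplit : n / L * L + n % L = n := by
      rw [mul_comm]; exact Nat.div_add_mod n L
    calc dfun P pi n i = dfun P pi (n / L * L + n % L) i := by rw [hsplit]
      _ ≤ 2 * (1 - ε) ^ (n / L) := d_iter hP hpi hpiinv j0 L ε hε hε1 hdoeb _ _ i
  -- squeeze
  have hg : Tendsto (fun n : ℕ => ENNReal.ofReal (2 * (1 - ε) ^ (n / L))) atTop (𝓝 0) := by
    have h1 : Tendsto (fun q : ℕ => (1 - ε) ^ q) atTop (𝓝 0) :=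
      tendsto_pow_atTop_nhds_zero_of_lt_one (by linarith) (by linarith)
    have h2 : Tendsto (fun n : ℕ => n / L) atTop atTop :=
      Nat.tendsto_div_const_atTop (by omega)
    have h3 : Tendsto (fun n : ℕ => 2 * (1 - ε) ^ (n / L)) atTop (𝓝 (2 * 0)) :=
      (h1.comp h2).const_mul 2
    rw [mul_zero] at h3
    have h4 := ENNReal.tendsto_ofReal h3
    rwa [ENNReal.ofReal_zero] at h4
  apply tendsto_of_tendsto_of_tendsto_of_le_of_le tendsto_const_nhds hg
  · intro n
    exact zero_le
  · intro n
    show (⨆ i, ∑' j, ENNReal.ofReal |matPow P n i j - pi j|) ≤ _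
    apply iSup_le
    intro i
    rw [ofReal_dfun hP hpi n i]
    exact ENNReal.ofReal_le_ofReal (hbound n i)

end Main

section Conv
variable {P : E → E → ℝ} {pi : E → ℝ}

lemma geom_half_sum_le : ∀ q : ℕ, ∑ i ∈ Finset.range q, ((1:ℝ)/2) ^ i ≤ 2 := by
  intro q
  induction q with
  | zero => simp
  | succ q ih =>
    rw [Finset.sum_range_succ']
    have h1 : ∑ i ∈ Finset.range q, ((1:ℝ)/2) ^ (i + 1)
        = (1/2) * ∑ i ∈ Finset.range q, ((1:ℝ)/2) ^ i := by
      rw [Finset.mul_sum]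
      apply Finset.sum_congr rfl; intro i _; ring
    rw [h1]
    simp only [pow_zero]
    linarith

lemma converse_dir (hP : IsStochastic P) (hpi : IsProbVec pi) (hpiinv : InvariantFor pi P)
    (hT : Tendsto (fun n => ⨆ i, ∑' j, ENNReal.ofReal |matPow P n i j - pi j|)
      atTop (𝓝 0)) :
    ∃ D : E → E → ℝ,
      (∀ i j, Tendsto (fun N => ∑ n ∈ Finset.range N, (matPow P n i j - pi j))
        atTop (𝓝 (D i j))) ∧
      (⨆ i, ∑' j, ENNReal.ofReal |D i j|) < ⊤ := by
  -- find n0 with contraction 1/2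
  have hev : ∀ᶠ n in atTop,
      (⨆ i, ∑' j, ENNReal.ofReal |matPow P n i j - pi j|) < ENNReal.ofReal (1/2) :=
    hT.eventually_lt_const (by simp [ENNReal.ofReal_pos])
  obtain ⟨n0, hn0⟩ := (hev.and (eventually_ge_atTop 1)).exists
  obtain ⟨hn0lt, hn0ge⟩ := hn0
  have hhalf : ∀ k, dfun P pi n0 k ≤ 1/2 := by
    intro k
    have h1 : ENNReal.ofReal (dfun P pi n0 k)
        ≤ ⨆ i, ∑' j, ENNReal.ofReal |matPow P n0 i j - pi j| := by
      rw [← ofReal_dfun hP hpi n0 k]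
      exact le_iSup (fun i => ∑' j, ENNReal.ofReal |matPow P n0 i j - pi j|) k
    have h2 := lt_of_le_of_lt h1 hn0lt
    have h3 := (ENNReal.ofReal_lt_ofReal_iff (by norm_num)).mp h2
    linarith
  -- geometric decay
  have claimA : ∀ q m i, dfun P pi (m + q * n0) i ≤ 2 * (1/2) ^ q := by
    intro q
    induction q with
    | zero => intro m i; simpa using d_le_two hP hpi m i
    | succ q ih =>
      intro m i
      have hsplit : m + (q + 1) * n0 = (m + q * n0) + n0 := by ring
      rw [hsplit]
      calc dfun P pi ((m + q * n0) + n0) i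
          ≤ (1/2) * dfun P pi (m + q * n0) i :=
            d_submult hP hpi hpiinv (m + q * n0) n0 i (1/2) (by norm_num) hhalf
        _ ≤ (1/2) * (2 * (1/2) ^ q) :=
            mul_le_mul_of_nonneg_left (ih m i) (by norm_num)
        _ = 2 * (1/2) ^ (q + 1) := by ring
  -- uniform partial-sum bound
  have partial1 : ∀ q i, ∑ n ∈ Finset.range (q * n0), dfun P pi n i
      ≤ (∑ q' ∈ Finset.range q, 2 * ((1:ℝ)/2) ^ q') * (n0 : ℝ) := by
    intro q
    induction q with
    | zero => intro i; simp
    | succ q ih =>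
      intro i
      have hle : q * n0 ≤ (q + 1) * n0 := by nlinarith
      rw [← Finset.sum_range_add_sum_Ico (fun n => dfun P pi n i) hle]
      have hico : ∑ n ∈ Finset.Ico (q * n0) ((q + 1) * n0), dfun P pi n i
          ≤ (n0 : ℝ) * (2 * (1/2) ^ q) := by
        have hcard : (Finset.Ico (q * n0) ((q + 1) * n0)).card = n0 := by
          rw [Nat.card_Ico]; ring_nf; omega
        have := Finset.sum_le_card_nsmul (Finset.Ico (q * n0) ((q + 1) * n0))
          (fun n => dfun P pi n i) (2 * (1/2) ^ q) ?_
        · rw [hcard, nsmul_eq_mul] at this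
          exact this
        · intro n hn
          obtain ⟨hn1, hn2⟩ := Finset.mem_Ico.mp hn
          have : n = (n - q * n0) + q * n0 := by omega
          rw [this]
          exact claimA q (n - q * n0) i
      have := ih i
      rw [Finset.sum_range_succ]
      have hgoal : (∑ q' ∈ Finset.range q, 2 * ((1:ℝ)/2) ^ q') * (n0 : ℝ)
            + (n0 : ℝ) * (2 * (1/2) ^ q)
          = (∑ q' ∈ Finset.range q, 2 * ((1:ℝ)/2) ^ q' + 2 * (1/2) ^ q) * (n0 : ℝ) := by
        ring
      linarith [hico, ih i]
  have partialU : ∀ N i, ∑ n ∈ Finset.range N, dfun P pi n i ≤ 4 * (n0 : ℝ) := by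
    intro N i
    have hsub : Finset.range N ⊆ Finset.range ((N / n0 + 1) * n0) := by
      rw [Finset.range_subset_range]
      have h2 : N ≤ (N / n0 + 1) * n0 := by
        have := Nat.div_add_mod N n0
        have hmod := Nat.mod_lt N (show 0 < n0 by omega)
        nlinarith
      exact h2
    calc ∑ n ∈ Finset.range N, dfun P pi n i
        ≤ ∑ n ∈ Finset.range ((N / n0 + 1) * n0), dfun P pi n i :=
          Finset.sum_le_sum_of_subset_of_nonneg hsub (fun n _ _ => d_nonneg n i)
      _ ≤ (∑ q' ∈ Finset.range (N / n0 + 1), 2 * ((1:ℝ)/2) ^ q') * (n0 : ℝ) :=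
          partial1 (N / n0 + 1) i
      _ ≤ 4 * (n0 : ℝ) := by
          have h1 : ∑ q' ∈ Finset.range (N / n0 + 1), 2 * ((1:ℝ)/2) ^ q'
              = 2 * ∑ q' ∈ Finset.range (N / n0 + 1), ((1:ℝ)/2) ^ q' := by
            rw [Finset.mul_sum]
          have h2 := geom_half_sum_le (N / n0 + 1)
          have h3 : (0:ℝ) ≤ (n0 : ℝ) := Nat.cast_nonneg n0
          rw [h1]
          nlinarith
  -- define D and conclude
  have habs : ∀ i j, Summable fun n => |matPow P n i j - pi j| := by
    intro i j
    apply summable_of_sum_range_le (fun n => abs_nonneg _)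
    intro N
    calc ∑ n ∈ Finset.range N, |matPow P n i j - pi j|
        ≤ ∑ n ∈ Finset.range N, dfun P pi n i := by
          apply Finset.sum_le_sum
          intro n _
          exact Summable.le_tsum (drow_summable hP hpi n i) j (fun k _ => abs_nonneg _)
      _ ≤ 4 * (n0 : ℝ) := partialU N i
  refine ⟨fun i j => ∑' n, (matPow P n i j - pi j), ?_, ?_⟩
  · intro i j
    exact (summable_abs_iff.mp (habs i j)).hasSum.tendsto_sum_nat
  · have hrow : ∀ i, ∑' j, ENNReal.ofReal |∑' n, (matPow P n i j - pi j)|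
        ≤ ENNReal.ofReal (4 * (n0 : ℝ)) := by
      intro i
      calc ∑' j, ENNReal.ofReal |∑' n, (matPow P n i j - pi j)|
          ≤ ∑' j, ∑' n, ENNReal.ofReal |matPow P n i j - pi j| := by
            apply ENNReal.tsum_le_tsum
            intro j
            have h1 : |∑' n, (matPow P n i j - pi j)| ≤ ∑' n, |matPow P n i j - pi j| := by
              have := norm_tsum_le_tsum_norm (f := fun n => matPow P n i j - pi j) (by
                simpa [Real.norm_eq_abs] using habs i j)
              simpa [Real.norm_eq_abs] using this
            calc ENNReal.ofReal |∑' n, (matPow P n i j - pi j)|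
                ≤ ENNReal.ofReal (∑' n, |matPow P n i j - pi j|) :=
                  ENNReal.ofReal_le_ofReal h1
              _ = ∑' n, ENNReal.ofReal |matPow P n i j - pi j| :=
                  ENNReal.ofReal_tsum_of_nonneg (fun n => abs_nonneg _) (habs i j)
        _ = ∑' n, ∑' j, ENNReal.ofReal |matPow P n i j - pi j| := ENNReal.tsum_comm
        _ = ∑' n : ℕ, ENNReal.ofReal (dfun P pi n i) := by
            apply tsum_congr; intro n; exact ofReal_dfun hP hpi n i
        _ ≤ ENNReal.ofReal (4 * (n0 : ℝ)) := by
            rw [ENNReal.tsum_eq_iSup_nat]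
            apply iSup_le
            intro N
            rw [← ENNReal.ofReal_sum_of_nonneg (fun n _ => d_nonneg n i)]
            exact ENNReal.ofReal_le_ofReal (partialU N i)
    calc (⨆ i, ∑' j, ENNReal.ofReal |∑' n, (matPow P n i j - pi j)|)
        ≤ ENNReal.ofReal (4 * (n0 : ℝ)) := iSup_le hrow
      _ < ⊤ := ENNReal.ofReal_lt_top

end Conv

/-- existence of a bounded deviation matrix is equivalent to uniform ergodicity. -/
theorem stmt4 {E : Type*} [Countable E] (P : E → E → ℝ) (pi : E → ℝ)
    (hP : IsStochastic P) (hPirr : IsIrred P)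
    (hpi : IsProbVec pi) (hpiinv : InvariantFor pi P) :
    (∃ D : E → E → ℝ,
        (∀ i j, Filter.Tendsto
          (fun N => ∑ n ∈ Finset.range N, (matPow P n i j - pi j))
          Filter.atTop (nhds (D i j))) ∧
        (⨆ i, ∑' j, ENNReal.ofReal |D i j|) < ⊤) ↔
      Filter.Tendsto
        (fun n => ⨆ i, ∑' j, ENNReal.ofReal |matPow P n i j - pi j|)
        Filter.atTop (nhds 0) := by
  constructor
  · rintro ⟨D, hD, hfin⟩
    exact forward_dir hP hPirr hpi hpiinv D hD hfin
  · intro hT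
    exact converse_dir hP hpi hpiinv hT

end
end
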